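/- The center of the twisted N=1 Schrödinger–Neveu–Schwarz algebra tsns is the one-dimensional subspace ℂM_0. -/
import Mathlib


open Finsupp

/-- Basis indices of the twisted `N = 1` Schrödinger–Neveu–Schwarz algebra.
`L n` is `L_n` (`n ∈ ℤ`), `G k` is `G_{k+1/2}` (`k ∈ ℤ`),
`Y k` is `Y_{k/2}` and `M k` is `M_{k/2}` (`k ∈ ℤ`, so `k/2` ranges over `(1/2)ℤ`). -/
inductive TIdx : Type
  | L : ℤ → TIdx
  | G : ℤ → TIdx
  | Y : ℤ → TIdx
  | M : ℤ → TIdx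
  deriving DecidableEq

noncomputable section

/-- The underlying vector space of `tsns`: the free `ℂ`-vector space on the basis. -/
abbrev Tsns : Type := TIdx →₀ ℂ

/-- The basis vectors. -/
def bs (i : TIdx) : Tsns := Finsupp.single i 1

/-- The `ℤ₂`-parity of a basis vector. -/
def parity : TIdx → ZMod 2
  | .L _ => 0
  | .G _ => 1
  | .Y k => (k : ZMod 2)
  | .M k => (k : ZMod 2)

/-- The sign `(-1)^{ab}` for parities `a, b`. -/
def sg (a b : ZMod 2) : ℂ := if a = 1 ∧ b = 1 then -1 else 1

/-- The super-bracket of `tsns` on basis vectors. -/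
def brIdx : TIdx → TIdx → Tsns
  | .L n, .L m => ((m : ℂ) - n) • bs (.L (n + m))
  | .L n, .G k => ((k : ℂ) + 1/2 - n/2) • bs (.G (k + n))
  | .G k, .L n => (-((k : ℂ) + 1/2 - n/2)) • bs (.G (k + n))
  | .L n, .Y k => (if (k : ZMod 2) = 0 then ((k : ℂ) - n)/2 else (k : ℂ)/2) • bs (.Y (k + 2*n))
  | .Y k, .L n => (-(if (k : ZMod 2) = 0 then ((k : ℂ) - n)/2 else (k : ℂ)/2)) • bs (.Y (k + 2*n))
  | .L n, .M k => (if (k : ZMod 2) = 0 then (k : ℂ)/2 else ((k : ℂ) + n)/2) • bs (.M (k + 2*n))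
  | .M k, .L n => (-(if (k : ZMod 2) = 0 then (k : ℂ)/2 else ((k : ℂ) + n)/2)) • bs (.M (k + 2*n))
  | .G k, .G l => (2 : ℂ) • bs (.L (k + l + 1))
  | .G l, .Y k => (if (k : ZMod 2) = 0 then ((k : ℂ) - 2*l - 1)/4 else 2) • bs (.Y (k + 2*l + 1))
  | .Y k, .G l => (if (k : ZMod 2) = 0 then -(((k : ℂ) - 2*l - 1)/4) else 2) • bs (.Y (k + 2*l + 1))
  | .G l, .M k => (if (k : ZMod 2) = 0 then (k : ℂ)/4 else 2) • bs (.M (k + 2*l + 1))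
  | .M k, .G l => (if (k : ZMod 2) = 0 then -((k : ℂ)/4) else 2) • bs (.M (k + 2*l + 1))
  | .Y k, .Y l =>
      (if (k : ZMod 2) = 0 then (if (l : ZMod 2) = 0 then ((l : ℂ) - k)/4 else (l : ℂ)/4)
       else (if (l : ZMod 2) = 0 then -((k : ℂ)/4) else 2)) • bs (.M (k + l))
  | _, _ => 0

/-- The super-bracket of `tsns`, as a bilinear map. -/
def brk : Tsns →ₗ[ℂ] Tsns →ₗ[ℂ] Tsns :=
  Finsupp.lsum ℂ fun i => LinearMap.toSpanSingleton ℂ _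
    (Finsupp.lsum ℂ fun j => LinearMap.toSpanSingleton ℂ Tsns (brIdx i j))

/-- `x` is homogeneous of parity `σ`. -/
def IsHom (σ : ZMod 2) (x : Tsns) : Prop := ∀ i ∈ x.support, parity i = σ

/-- The tensor square `tsns ⊗ tsns`, modelled as the free vector space on pairs
of basis indices. -/
abbrev T2 : Type := (TIdx × TIdx) →₀ ℂ

/-- The tensor cube `tsns ⊗ tsns ⊗ tsns`. -/
abbrev T3 : Type := (TIdx × TIdx × TIdx) →₀ ℂ

/-- The tensor product map `tsns × tsns → tsns ⊗ tsns`. -/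
def tp : Tsns →ₗ[ℂ] Tsns →ₗ[ℂ] T2 :=
  Finsupp.lsum ℂ fun i => LinearMap.toSpanSingleton ℂ _
    (Finsupp.lsum ℂ fun j => LinearMap.toSpanSingleton ℂ T2 (Finsupp.single (i, j) 1))

/-- The tensor product map `tsns × tsns × tsns → tsns ⊗ tsns ⊗ tsns`. -/
def t3 : Tsns →ₗ[ℂ] Tsns →ₗ[ℂ] Tsns →ₗ[ℂ] T3 :=
  Finsupp.lsum ℂ fun i => LinearMap.toSpanSingleton ℂ _
    (Finsupp.lsum ℂ fun j => LinearMap.toSpanSingleton ℂ _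
      (Finsupp.lsum ℂ fun k => LinearMap.toSpanSingleton ℂ T3 (Finsupp.single (i, j, k) 1)))

/-- The adjoint diagonal action of `tsns` on `tsns ⊗ tsns`:
`x ∗ (a ⊗ b) = [x,a] ⊗ b + (-1)^{[x][a]} a ⊗ [x,b]`. -/
def star2 : Tsns →ₗ[ℂ] T2 →ₗ[ℂ] T2 :=
  Finsupp.lsum ℂ fun i => LinearMap.toSpanSingleton ℂ _
    (Finsupp.lsum ℂ fun p => LinearMap.toSpanSingleton ℂ T2
      (tp (brIdx i p.1) (bs p.2) + sg (parity i) (parity p.1) • tp (bs p.1) (brIdx i p.2)))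

/-- The adjoint diagonal action of `tsns` on `tsns ⊗ tsns ⊗ tsns`. -/
def star3 : Tsns →ₗ[ℂ] T3 →ₗ[ℂ] T3 :=
  Finsupp.lsum ℂ fun i => LinearMap.toSpanSingleton ℂ _
    (Finsupp.lsum ℂ fun t => LinearMap.toSpanSingleton ℂ T3
      (t3 (brIdx i t.1) (bs t.2.1) (bs t.2.2)
        + sg (parity i) (parity t.1) • t3 (bs t.1) (brIdx i t.2.1) (bs t.2.2)
        + (sg (parity i) (parity t.1) * sg (parity i) (parity t.2.1)) •
            t3 (bs t.1) (bs t.2.1) (brIdx i t.2.2)))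

/-- The super-twist map `τ(x ⊗ y) = (-1)^{[x][y]} y ⊗ x`. -/
def tau : T2 →ₗ[ℂ] T2 :=
  Finsupp.lsum ℂ fun p => LinearMap.toSpanSingleton ℂ T2
    (sg (parity p.1) (parity p.2) • Finsupp.single (p.2, p.1) 1)

/-- The super-cyclic map `ξ(x₁ ⊗ x₂ ⊗ x₃) = (-1)^{[x₁]([x₂]+[x₃])} x₂ ⊗ x₃ ⊗ x₁`. -/
def xi : T3 →ₗ[ℂ] T3 :=
  Finsupp.lsum ℂ fun t => LinearMap.toSpanSingleton ℂ T3
    (sg (parity t.1) (parity t.2.1 + parity t.2.2) • Finsupp.single (t.2.1, t.2.2, t.1) 1)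

/-- `Im(1⊗1 - τ) ⊆ tsns ⊗ tsns`. -/
def ImSkew : Submodule ℂ T2 := LinearMap.range (LinearMap.id - tau)

/-- `ℂ M₀ ⊗ M₀`, the tensor square of the center. -/
def CC : Submodule ℂ T2 := Submodule.span ℂ {Finsupp.single (TIdx.M 0, TIdx.M 0) 1}

/-- The `(1/2)ℤ`-degree of a basis vector, recorded in half-units (i.e. twice the
degree, an integer). -/
def hdeg : TIdx → ℤ
  | .L n => 2*n
  | .G k => 2*k + 1
  | .Y k => k
  | .M k => k

/-- The degree (in half-units) of a basis vector of the tensor square. -/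
def hdeg2 (p : TIdx × TIdx) : ℤ := hdeg p.1 + hdeg p.2

/-- `d : tsns → tsns ⊗ tsns` is a homogeneous derivation of `ℤ₂`-parity `π`:
`d [x,y] = (-1)^{[d][x]} x ∗ d y - (-1)^{[y]([d]+[x])} y ∗ d x`
(stated on homogeneous basis vectors). -/
def IsDerP (π : ZMod 2) (d : Tsns →ₗ[ℂ] T2) : Prop :=
  ∀ i j : TIdx, d (brk (bs i) (bs j)) =
    sg π (parity i) • star2 (bs i) (d (bs j))
      - sg (parity j) (π + parity i) • star2 (bs j) (d (bs i))

/-- An even derivation `tsns → tsns ⊗ tsns`. -/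
def IsDer2 (d : Tsns →ₗ[ℂ] T2) : Prop := IsDerP 0 d

/-- The special derivations `d^♮` on basis vectors (parameters `α, α†, β, β†`). -/
def dnatB (a a' b b' : ℂ) : TIdx → T2
  | .L n => (a * n) • Finsupp.single (.M 0, .M (2*n)) 1
      + (a' * n) • Finsupp.single (.M (2*n), .M 0) 1
  | .G k => (a * ((k : ℂ) + 1/2)) • Finsupp.single (.M 0, .M (2*k+1)) 1
      + (a' * ((k : ℂ) + 1/2)) • Finsupp.single (.M (2*k+1), .M 0) 1
  | .Y k => b • Finsupp.single (.M 0, .Y k) 1 + b' • Finsupp.single (.Y k, .M 0) 1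
  | .M k => (2*b) • Finsupp.single (.M 0, .M k) 1 + (2*b') • Finsupp.single (.M k, .M 0) 1

/-- The special derivations `d^♮ : tsns → tsns ⊗ tsns`. -/
def dnat (a a' b b' : ℂ) : Tsns →ₗ[ℂ] T2 :=
  Finsupp.lsum ℂ fun i => LinearMap.toSpanSingleton ℂ T2 (dnatB a a' b b' i)

/-- Multiplication by `(-1)^{σ·[u]}` on `tsns ⊗ tsns`. -/
def twT2 (σ : ZMod 2) : T2 →ₗ[ℂ] T2 :=
  Finsupp.lsum ℂ fun p => LinearMap.toSpanSingleton ℂ T2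
    (sg σ (parity p.1 + parity p.2) • Finsupp.single p 1)

/-- The coboundary `Δ_r (x) = (-1)^{[r][x]} x ∗ r`. -/
def Δr (r : T2) : Tsns →ₗ[ℂ] T2 :=
  Finsupp.lsum ℂ fun i => LinearMap.toSpanSingleton ℂ T2 (star2 (bs i) (twT2 (parity i) r))

/-- The embedding `tsns ⊗ (tsns ⊗ tsns) → tsns ⊗ tsns ⊗ tsns`. -/
def t13 : Tsns →ₗ[ℂ] T2 →ₗ[ℂ] T3 :=
  Finsupp.lsum ℂ fun i => LinearMap.toSpanSingleton ℂ _
    (Finsupp.lsum ℂ fun q => LinearMap.toSpanSingleton ℂ T3 (Finsupp.single (i, q.1, q.2) 1))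

/-- `1 ⊗ D : tsns ⊗ tsns → tsns ⊗ tsns ⊗ tsns` for an (even) linear map `D`. -/
def oneTensor (D : Tsns →ₗ[ℂ] T2) : T2 →ₗ[ℂ] T3 :=
  Finsupp.lsum ℂ fun p => LinearMap.toSpanSingleton ℂ T3 (t13 (bs p.1) (D (bs p.2)))

/-- The summand of `c(r)` coming from a pair of basis tensors
`p = a_i ⊗ b_i`, `q = a_j ⊗ b_j`. -/
def cB (p q : TIdx × TIdx) : T3 :=
  sg (parity q.1) (parity p.2) • t3 (brIdx p.1 q.1) (bs p.2) (bs q.2)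
    + t3 (bs p.1) (brIdx p.2 q.1) (bs q.2)
    + sg (parity q.1) (parity p.2) • t3 (bs p.1) (bs q.1) (brIdx p.2 q.2)

/-- `c` as a bilinear map. -/
def cY : T2 →ₗ[ℂ] T2 →ₗ[ℂ] T3 :=
  Finsupp.lsum ℂ fun p => LinearMap.toSpanSingleton ℂ _
    (Finsupp.lsum ℂ fun q => LinearMap.toSpanSingleton ℂ T3 (cB p q))

/-- `c(r) = [r¹²,r¹³] + [r¹²,r²³] + [r¹³,r²³]`. -/
def cr (r : T2) : T3 := cY r r

/-- `(tsns, [·,·], D)` is a Lie superbialgebra: `Im D ⊆ Im(1⊗1−τ)`, the super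
co-Jacobi identity holds, and `D` is a 1-cocycle. -/
def IsSuperBialg (D : Tsns →ₗ[ℂ] T2) : Prop :=
  (∀ x : Tsns, D x ∈ ImSkew) ∧
  (∀ x : Tsns,
    oneTensor D (D x) + xi (oneTensor D (D x)) + xi (xi (oneTensor D (D x))) = 0) ∧
  (∀ i j : TIdx, D (brk (bs i) (bs j)) =
    star2 (bs i) (D (bs j)) - sg (parity i) (parity j) • star2 (bs j) (D (bs i)))

end

lemma brk_bs (x : Tsns) (j : TIdx) :
    brk x (bs j) = x.sum fun i c => c • brIdx i j := by
  simp [brk, bs, Finsupp.lsum_apply, Finsupp.sum_apply', LinearMap.toSpanSingleton_apply]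

lemma brk_bs_apply (x : Tsns) (j t : TIdx) :
    brk x (bs j) t = x.sum fun i c => c * brIdx i j t := by
  rw [brk_bs, Finsupp.sum_apply]
  simp [Finsupp.smul_apply, smul_eq_mul]

lemma sum_delta (x : Tsns) (ψ : TIdx → ℂ) (i₀ : TIdx) (h : ∀ i, i ≠ i₀ → ψ i = 0) :
    (x.sum fun i c => c * ψ i) = x i₀ * ψ i₀ := by
  rw [Finsupp.sum]
  by_cases hm : i₀ ∈ x.support
  · rw [Finset.sum_eq_single i₀ (fun i _ hi => by rw [h i hi, mul_zero])
      (fun hc => absurd hm hc)]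
  · rw [Finset.sum_eq_zero, Finsupp.notMem_support_iff.mp hm, zero_mul]
    intro i hi
    rw [h i (fun e => hm (e ▸ hi)), mul_zero]

noncomputable def sL : TIdx → ℂ
  | .L n => -n
  | .G k => -((k : ℂ) + 1/2)
  | .Y k => -((k : ℂ)/2)
  | .M k => -((k : ℂ)/2)

lemma brIdx_L0 (i t : TIdx) : brIdx i (.L 0) t = (if i = t then sL i else 0) := by
  cases i <;> simp [brIdx, bs, sL, Finsupp.single_apply] <;> ring_nf <;>
    split <;> simp_all <;> ring

lemma brIdx_M1 (i : TIdx) : brIdx i (.M 1) (.M 1) = (if i = .L 0 then 1/2 else 0) := by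
  have h2 : ((1:ℤ) : ZMod 2) ≠ 0 := by decide
  cases i with
  | L n =>
    rcases eq_or_ne n 0 with rfl | hn
    · norm_num [brIdx, bs, Finsupp.single_apply, h2]
    · have h3 : TIdx.M (1 + 2*n) ≠ TIdx.M 1 := by simp; omega
      simp [brIdx, bs, Finsupp.single_apply, h2, h3, hn]
  | G l =>
    have h3 : TIdx.M (1 + 2*l + 1) ≠ TIdx.M 1 := by simp; omega
    simp [brIdx, bs, Finsupp.single_apply, h2, h3]
  | Y k => simp [brIdx]
  | M k => simp [brIdx]

lemma brIdx_G0 (i : TIdx) : brIdx i (.G 0) (.Y 1) = (if i = .Y 0 then 1/4 else 0) := by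
  cases i with
  | L n => simp [brIdx, bs, Finsupp.single_apply]
  | G l => simp [brIdx, bs, Finsupp.single_apply]
  | Y k =>
    rcases eq_or_ne k 0 with rfl | hk
    · norm_num [brIdx, bs, Finsupp.single_apply]
    · have h3 : TIdx.Y (k + 1) ≠ TIdx.Y 1 := by simp; omega
      simp only [brIdx, bs]
      split <;> simp [Finsupp.single_apply, h3, hk]
  | M k =>
    simp only [brIdx, bs]
    split <;> simp [Finsupp.single_apply]

lemma brIdx_M0 (j : TIdx) : brIdx (.M 0) j = 0 := by
  cases j <;> norm_num [brIdx]

lemma brk_bsM0 (y : Tsns) : brk (bs (.M 0)) y = 0 := by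
  simp [brk, bs, Finsupp.lsum_single, Finsupp.lsum_apply, brIdx_M0]
  rw [Finsupp.sum]; simp

/-- the center of `tsns` is the one-dimensional subspace `ℂ M₀`. -/
theorem center_tsns_eq_CM0 :
    ∀ x : Tsns, (∀ y : Tsns, brk x y = 0) ↔ ∃ c : ℂ, x = c • bs (TIdx.M 0) := by
  intro x
  constructor
  · intro h
    have key : ∀ j t : TIdx, (x.sum fun i c => c * brIdx i j t) = 0 := by
      intro j t
      rw [← brk_bs_apply, h]; rfl
    have h1 : ∀ t, x t * sL t = 0 := by
      intro t
      have e := key (.L 0) t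
      simp only [brIdx_L0] at e
      rwa [sum_delta x _ t (fun i hi => if_neg hi), if_pos rfl] at e
    have h2 : x (.L 0) * (1/2) = 0 := by
      have e := key (.M 1) (.M 1)
      simp only [brIdx_M1] at e
      rwa [sum_delta x _ (.L 0) (fun i hi => if_neg hi), if_pos rfl] at e
    have h3 : x (.Y 0) * (1/4) = 0 := by
      have e := key (.G 0) (.Y 1)
      simp only [brIdx_G0] at e
      rwa [sum_delta x _ (.Y 0) (fun i hi => if_neg hi), if_pos rfl] at e
    have hL0 : x (.L 0) = 0 := by
      rcases mul_eq_zero.mp h2 with h | h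
      · exact h
      · norm_num at h
    have hY0 : x (.Y 0) = 0 := by
      rcases mul_eq_zero.mp h3 with h | h
      · exact h
      · norm_num at h
    refine ⟨x (.M 0), ?_⟩
    ext t
    have hb : ∀ t : TIdx, (x (TIdx.M 0) • bs (TIdx.M 0)) t
        = if TIdx.M 0 = t then x (TIdx.M 0) else 0 := by
      intro t; rw [Finsupp.smul_apply, bs, Finsupp.single_apply]
      split <;> simp
    cases t with
    | L n =>
      rw [hb]
      rcases eq_or_ne n 0 with rfl | hn
      · simpa using hL0
      · have hs : sL (.L n) ≠ 0 := by
          simp [sL, hn]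
        simpa [hs] using mul_eq_zero.mp (h1 (.L n))
    | G k =>
      rw [hb]
      have hs : sL (.G k) ≠ 0 := by
        simp only [sL, neg_ne_zero]
        intro e
        have : ((2*k+1 : ℤ) : ℂ) = 0 := by push_cast; linear_combination 2*e
        have := (Int.cast_eq_zero (α := ℂ)).mp this
        omega
      simpa [hs] using mul_eq_zero.mp (h1 (.G k))
    | Y k =>
      rw [hb]
      rcases eq_or_ne k 0 with rfl | hk
      · simpa using hY0
      · have hs : sL (.Y k) ≠ 0 := by
          simp [sL, hk]
        simpa [hs] using mul_eq_zero.mp (h1 (.Y k))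
    | M k =>
      rw [hb]
      rcases eq_or_ne k 0 with rfl | hk
      · simp
      · have hs : sL (.M k) ≠ 0 := by
          simp [sL, hk]
        have := mul_eq_zero.mp (h1 (.M k))
        simp only [hs, or_false] at this
        simp [this, hk, (by simpa [eq_comm] using hk : ¬ (0 : ℤ) = k)]
  · rintro ⟨c, rfl⟩ y
    rw [map_smul, LinearMap.smul_apply, brk_bsM0, smul_zero]
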